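/- With E_π defined as the composition of supremum operators along a finite partition π of [0,t], define S(t)u := sup_{π ∈ P_t} E_π u (pointwise supremum over all finite partitions of [0,t] containing 0 and t). Then S satisfies the semigroup property S(s+t)u = S(s)S(t)u for all s,t ≥ 0, provided each E_h is monotone and continuous from below and for each u, t there is an increasing sequence of partitions π_n ∈ P_t with E_{π_n}u ↗ S(t)u. -/

import Mathlib

noncomputable def applyPart {M : Type*} (E : ℝ → (M → ℝ) → (M → ℝ)) :
    List ℝ → (M → ℝ) → (M → ℝ)
  | a :: b :: rest, u => E (b - a) (applyPart E (b :: rest) u)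
  | _, u => u

/-- `E_π u` for a finite partition `π`. -/
noncomputable def Epart {M : Type*} (E : ℝ → (M → ℝ) → (M → ℝ))
    (π : Finset ℝ) (u : M → ℝ) : M → ℝ :=
  applyPart E (π.sort (· ≤ ·)) u

/-- The set of finite partitions of `[0,t]` (containing `0` and `t`). -/
def PartsOf (t : ℝ) : Set (Finset ℝ) :=
  {π | 0 ∈ π ∧ t ∈ π ∧ ∀ s ∈ π, 0 ≤ s ∧ s ≤ t}

/-- The Nisio semigroup: `S(t)u = ⨆_{π ∈ P_t} E_π u` pointwise. -/
noncomputable def Nisio {M : Type*} (E : ℝ → (M → ℝ) → (M → ℝ))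
    (t : ℝ) (u : M → ℝ) (x : M) : ℝ :=
  ⨆ π : PartsOf t, Epart E π.1 u x

section ListLemmas
variable {M : Type*} {E : ℝ → (M → ℝ) → (M → ℝ)}

lemma applyPart_cons (a b : ℝ) (l : List ℝ) (u : M → ℝ) :
    applyPart E (a :: b :: l) u = E (b - a) (applyPart E (b :: l) u) := rfl

lemma applyPart_map_add (c : ℝ) : ∀ (l : List ℝ) (u : M → ℝ),
    applyPart E (l.map (· + c)) u = applyPart E l u
  | [], u => rfl
  | [a], u => rfl
  | a :: b :: l, u => by
      have h1 : ((a :: b :: l).map (· + c)) = (a + c) :: ((b :: l).map (· + c)) := rfl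
      have h2 : ((b :: l).map (· + c)) = (b + c) :: (l.map (· + c)) := rfl
      have ih := applyPart_map_add c (b :: l) u
      rw [h2] at ih
      rw [h1, h2, applyPart_cons, ih, applyPart_cons]
      congr 1
      ring

lemma applyPart_append : ∀ (l1 : List ℝ) (c : ℝ) (l2 : List ℝ) (u : M → ℝ),
    applyPart E (l1 ++ c :: l2) u = applyPart E (l1 ++ [c]) (applyPart E (c :: l2) u)
  | [], c, l2, u => rfl
  | [a], c, l2, u => rfl
  | a :: b :: l1, c, l2, u => by
      have ih := applyPart_append (b :: l1) c l2 u
      simp only [List.cons_append, applyPart_cons] at *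
      rw [ih]

lemma applyPart_mono
    (hm : ∀ h, 0 ≤ h → ∀ u v : M → ℝ, (∀ x, u x ≤ v x) → ∀ x, E h u x ≤ E h v x) :
    ∀ (l : List ℝ), l.Pairwise (· ≤ ·) →
    ∀ (u v : M → ℝ), (∀ x, u x ≤ v x) → ∀ x, applyPart E l u x ≤ applyPart E l v x
  | [], _, u, v, huv, x => huv x
  | [a], _, u, v, huv, x => huv x
  | a :: b :: l, hs, u, v, huv, x => by
      rw [applyPart_cons, applyPart_cons]
      have hab : a ≤ b := (List.pairwise_cons.mp hs).1 b (by simp)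
      exact hm (b - a) (by linarith) _ _
        (applyPart_mono hm (b :: l) (List.pairwise_cons.mp hs).2 u v huv) x

lemma applyPart_tendsto
    (hm : ∀ h, 0 ≤ h → ∀ u v : M → ℝ, (∀ x, u x ≤ v x) → ∀ x, E h u x ≤ E h v x)
    (hc : ∀ h, 0 ≤ h → ∀ (u : ℕ → M → ℝ) (v : M → ℝ),
      (∀ n x, u n x ≤ u (n + 1) x) →
      (∀ x, Filter.Tendsto (fun n => u n x) Filter.atTop (nhds (v x))) →
      ∀ x, Filter.Tendsto (fun n => E h (u n) x) Filter.atTop (nhds (E h v x))) :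
    ∀ (l : List ℝ), l.Pairwise (· ≤ ·) → ∀ (u : ℕ → M → ℝ) (v : M → ℝ),
    (∀ n x, u n x ≤ u (n + 1) x) →
    (∀ x, Filter.Tendsto (fun n => u n x) Filter.atTop (nhds (v x))) →
    ∀ x, Filter.Tendsto (fun n => applyPart E l (u n) x) Filter.atTop
      (nhds (applyPart E l v x))
  | [], _, u, v, hincr, hconv, x => hconv x
  | [a], _, u, v, hincr, hconv, x => hconv x
  | a :: b :: l, hs, u, v, hincr, hconv, x => by
      simp only [applyPart_cons]
      have hab : a ≤ b := (List.pairwise_cons.mp hs).1 b (by simp)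
      exact hc (b - a) (by linarith) (fun n => applyPart E (b :: l) (u n))
        (applyPart E (b :: l) v)
        (fun n y => applyPart_mono hm (b :: l) (List.pairwise_cons.mp hs).2 (u n) (u (n + 1))
          (hincr n) y)
        (applyPart_tendsto hm hc (b :: l) (List.pairwise_cons.mp hs).2 u v hincr hconv) x

lemma applyPart_le_orderedInsert
    (hm : ∀ h, 0 ≤ h → ∀ u v : M → ℝ, (∀ x, u x ≤ v x) → ∀ x, E h u x ≤ E h v x)
    (hK : ∀ a c b : ℝ, a ≤ c → c ≤ b → ∀ (v : M → ℝ) (x : M),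
      E (b - a) v x ≤ E (c - a) (E (b - c) v) x) :
    ∀ (l : List ℝ), l.Pairwise (· ≤ ·) → ∀ s : ℝ, s ∉ l →
    (∃ a ∈ l, a ≤ s) → (∃ b ∈ l, s ≤ b) → ∀ (u : M → ℝ) (x : M),
    applyPart E l u x ≤ applyPart E (l.orderedInsert (· ≤ ·) s) u x
  | [], _, s, _, hlo, _, u, x => by simp at hlo
  | a :: rest, hs, s, hsnot, hlo, hhi, u, x => by
      by_cases hsa : s ≤ a
      · -- then the smaller element forces s = a ∈ l, contradiction
        exfalso
        obtain ⟨a', ha'mem, ha'⟩ := hlo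
        have haa' : a ≤ a' := by
          rcases List.mem_cons.mp ha'mem with h | h
          · exact h.symm.le
          · exact (List.pairwise_cons.mp hs).1 a' h
        have : s = a := le_antisymm hsa (by linarith)
        exact hsnot (this ▸ (List.mem_cons_self (a := a) (l := rest)))
      · push_neg at hsa
        rw [List.orderedInsert, if_neg (not_le.mpr hsa)]
        match rest, hs, hsnot, hhi with
        | [], _, _, hhi => 
          exfalso
          obtain ⟨b, hbmem, hb⟩ := hhi
          have : b = a := by simpa using hbmem
          linarith [this ▸ hb]
        | b :: rest', hs, hsnot, hhi =>
          by_cases hsb : s ≤ b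
          · rw [List.orderedInsert, if_pos hsb]
            rw [applyPart_cons, applyPart_cons, applyPart_cons]
            exact hK a s b hsa.le hsb (applyPart E (b :: rest') u) x
          · push_neg at hsb
            rw [List.orderedInsert, if_neg (not_le.mpr hsb)]
            rw [applyPart_cons]
            have hstep := applyPart_le_orderedInsert hm hK (b :: rest')
              (List.pairwise_cons.mp hs).2 s
              (fun h => hsnot (List.mem_cons_of_mem a h))
              ⟨b, (List.mem_cons_self (a := b) (l := rest')), hsb.le⟩
              (by
                obtain ⟨b', hb'mem, hb'⟩ := hhi
                rcases List.mem_cons.mp hb'mem with h | h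
                · exact absurd (h ▸ hb') (not_le.mpr hsa)
                · exact ⟨b', h, hb'⟩) u
            have hrw : (b :: rest').orderedInsert (· ≤ ·) s
                = b :: rest'.orderedInsert (· ≤ ·) s := by
              rw [List.orderedInsert, if_neg (not_le.mpr hsb)]
            rw [hrw] at hstep
            have hab : a ≤ b := (List.pairwise_cons.mp hs).1 b (by simp)
            calc E (b - a) (applyPart E (b :: rest') u) x
                ≤ E (b - a) (applyPart E (b :: rest'.orderedInsert (· ≤ ·) s) u) x := by
                  apply hm (b - a) (by linarith)
                  intro y
                  exact hstep y
              _ = applyPart E (a :: b :: rest'.orderedInsert (· ≤ ·) s) u x := rfl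

end ListLemmas

section SortLemmas

lemma sort_min_cons (A : Finset ℝ) (a : ℝ) (ha : a ∈ A) (hmin : ∀ x ∈ A, a ≤ x) :
    A.sort (· ≤ ·) = a :: (A.erase a).sort (· ≤ ·) := by
  have h := Finset.sort_insert (r := (· ≤ ·)) (a := a) (s := A.erase a)
    (fun b hb => hmin b (Finset.mem_of_mem_erase hb)) (Finset.notMem_erase a A)
  rw [Finset.insert_erase ha] at h
  exact h

lemma sort_max_append (A : Finset ℝ) (a : ℝ) (ha : a ∈ A) (hmax : ∀ x ∈ A, x ≤ a) :
    A.sort (· ≤ ·) = (A.erase a).sort (· ≤ ·) ++ [a] := by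
  apply List.Perm.eq_of_pairwise' (r := ((· ≤ ·) : ℝ → ℝ → Prop))
  rotate_right
  · apply List.perm_of_nodup_nodup_toFinset_eq (Finset.sort_nodup _ _)
    · rw [List.nodup_append]
      refine ⟨Finset.sort_nodup _ _, List.nodup_singleton a, ?_⟩
      intro x hx y hx' hxy
      subst hxy
      have hxe : x ∈ A.erase a := (Finset.mem_sort _).mp hx
      have hxa : x = a := by simpa using hx'
      rw [hxa] at hxe
      exact Finset.notMem_erase a A hxe
    · rw [List.toFinset_append, Finset.sort_toFinset, Finset.sort_toFinset]
      ext y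
      by_cases hy : y = a <;> simp [hy, ha, Finset.mem_erase]
  · exact Finset.pairwise_sort _ _
  · apply List.pairwise_append.mpr
    refine ⟨Finset.pairwise_sort _ _, List.pairwise_singleton _ a, ?_⟩
    intro x hx y hy
    have hy' : y = a := by simpa using hy
    exact hy' ▸ hmax x (Finset.mem_of_mem_erase ((Finset.mem_sort _).mp hx))

lemma sort_union_split (A B : Finset ℝ) (c : ℝ) (hcA : c ∈ A) (hcB : c ∈ B)
    (hA : ∀ x ∈ A, x ≤ c) (hB : ∀ x ∈ B, c ≤ x) :
    (A ∪ B).sort (· ≤ ·) = (A.erase c).sort (· ≤ ·) ++ B.sort (· ≤ ·) := by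
  apply List.Perm.eq_of_pairwise' (r := ((· ≤ ·) : ℝ → ℝ → Prop))
  rotate_right
  · apply List.perm_of_nodup_nodup_toFinset_eq (Finset.sort_nodup _ _)
    · rw [List.nodup_append]
      refine ⟨Finset.sort_nodup _ _, Finset.sort_nodup _ _, ?_⟩
      intro x hx y hx' hxy
      subst hxy
      have h1 : x ∈ A.erase c := (Finset.mem_sort _).mp hx
      have h2 : x ∈ B := (Finset.mem_sort _).mp hx'
      have : x < c := lt_of_le_of_ne (hA x (Finset.mem_of_mem_erase h1))
        (Finset.ne_of_mem_erase h1)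
      linarith [hB x h2]
    · rw [List.toFinset_append, Finset.sort_toFinset, Finset.sort_toFinset,
        Finset.sort_toFinset]
      ext y
      simp only [Finset.mem_union, Finset.mem_erase]
      constructor
      · rintro (h | h)
        · by_cases hyc : y = c
          · exact Or.inr (hyc ▸ hcB)
          · exact Or.inl ⟨hyc, h⟩
        · exact Or.inr h
      · rintro (h | h)
        · exact Or.inl h.2
        · exact Or.inr h
  · exact Finset.pairwise_sort _ _
  · apply List.pairwise_append.mpr
    refine ⟨Finset.pairwise_sort _ _, Finset.pairwise_sort _ _, ?_⟩
    intro x hx y hy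
    have h1 : x ∈ A.erase c := (Finset.mem_sort _).mp hx
    have h2 : y ∈ B := (Finset.mem_sort _).mp hy
    exact le_trans (hA x (Finset.mem_of_mem_erase h1)) (hB y h2)

lemma sort_image_add (A : Finset ℝ) (c : ℝ) :
    (A.image (· + c)).sort (· ≤ ·) = (A.sort (· ≤ ·)).map (· + c) := by
  apply List.Perm.eq_of_pairwise' (r := ((· ≤ ·) : ℝ → ℝ → Prop))
  rotate_right
  · apply List.perm_of_nodup_nodup_toFinset_eq (Finset.sort_nodup _ _)
    · exact (Finset.sort_nodup _ _).map (fun x y h => by simpa using h)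
    · ext y
      simp only [Finset.sort_toFinset, List.mem_toFinset, List.mem_map, Finset.mem_sort,
        Finset.mem_image]
  · exact Finset.pairwise_sort _ _
  · exact List.Pairwise.map _ (fun a b h => by simpa using h) (Finset.pairwise_sort _ _)

lemma sort_insert_orderedInsert (A : Finset ℝ) (s : ℝ) (hs : s ∉ A) :
    (insert s A).sort (· ≤ ·) = (A.sort (· ≤ ·)).orderedInsert (· ≤ ·) s := by
  apply List.Perm.eq_of_pairwise' (r := ((· ≤ ·) : ℝ → ℝ → Prop))
  rotate_right
  · apply List.perm_of_nodup_nodup_toFinset_eq (Finset.sort_nodup _ _)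
    · apply (List.perm_orderedInsert _ _ _).nodup_iff.mpr
      rw [List.nodup_cons]
      exact ⟨fun h => hs ((Finset.mem_sort _).mp h), Finset.sort_nodup _ _⟩
    · rw [Finset.sort_toFinset, List.toFinset_eq_of_perm _ _ (List.perm_orderedInsert _ s _)]
      rw [List.toFinset_cons, Finset.sort_toFinset]
  · exact Finset.pairwise_sort _ _
  · exact List.Pairwise.orderedInsert s _ (Finset.pairwise_sort _ _)

end SortLemmas

section EpartLemmas
variable {M : Type*} {E : ℝ → (M → ℝ) → (M → ℝ)}

lemma Epart_union (A B : Finset ℝ) (c : ℝ) (hcA : c ∈ A) (hcB : c ∈ B)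
    (hA : ∀ x ∈ A, x ≤ c) (hB : ∀ x ∈ B, c ≤ x) (u : M → ℝ) :
    Epart E (A ∪ B) u = Epart E A (Epart E B u) := by
  unfold Epart
  rw [sort_union_split A B c hcA hcB hA hB, sort_min_cons B c hcB hB, applyPart_append,
    ← sort_max_append A c hcA hA, ← sort_min_cons B c hcB hB]

lemma Epart_image_add (A : Finset ℝ) (c : ℝ) (u : M → ℝ) :
    Epart E (A.image (· + c)) u = Epart E A u := by
  unfold Epart
  rw [sort_image_add, applyPart_map_add]

end EpartLemmas

theorem stmt4 {M Λ : Type*} [Nonempty Λ]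
    (S : Λ → ℝ → (M → ℝ) → (M → ℝ))
    (hid : ∀ l (u : M → ℝ), S l 0 u = u)
    (hsg : ∀ l s t, 0 ≤ s → 0 ≤ t → ∀ u : M → ℝ, S l (s + t) u = S l s (S l t u))
    (hadd : ∀ l h (u v : M → ℝ), S l h (u + v) = S l h u + S l h v)
    (hsmul : ∀ l h (c : ℝ) (u : M → ℝ), S l h (c • u) = c • S l h u)
    (hbdd : ∀ h (u : M → ℝ) (x : M), BddAbove (Set.range fun l => S l h u x))
    (E : ℝ → (M → ℝ) → (M → ℝ))
    (hE : ∀ h (u : M → ℝ) (x : M), E h u x = ⨆ l, S l h u x)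
    -- each `E_h` is monotone
    (hmono : ∀ h, 0 ≤ h → ∀ u v : M → ℝ, (∀ x, u x ≤ v x) → ∀ x, E h u x ≤ E h v x)
    -- each `E_h` is continuous from below
    (hcb : ∀ h, 0 ≤ h → ∀ (u : ℕ → M → ℝ) (v : M → ℝ),
      (∀ n x, u n x ≤ u (n + 1) x) →
      (∀ x, Filter.Tendsto (fun n => u n x) Filter.atTop (nhds (v x))) →
      ∀ x, Filter.Tendsto (fun n => E h (u n) x) Filter.atTop (nhds (E h v x)))
    -- the pointwise suprema defining the Nisio semigroup are finite
    (hbddN : ∀ t (u : M → ℝ) (x : M),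
      BddAbove (Set.range fun π : PartsOf t => Epart E π.1 u x))
    -- approximating increasing sequences of partitions exist
    (happrox : ∀ t, 0 ≤ t → ∀ u : M → ℝ, ∃ π : ℕ → Finset ℝ,
      (∀ n, π n ∈ PartsOf t) ∧ (∀ n, π n ⊆ π (n + 1)) ∧
      ∀ x, Filter.Tendsto (fun n => Epart E (π n) u x) Filter.atTop
        (nhds (Nisio E t u x))) :
    ∀ s t, 0 ≤ s → 0 ≤ t → ∀ (u : M → ℝ) (x : M),
      Nisio E (s + t) u x = Nisio E s (Nisio E t u) x := by
  have hK : ∀ a c b : ℝ, a ≤ c → c ≤ b → ∀ (v : M → ℝ) (x : M),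
      E (b - a) v x ≤ E (c - a) (E (b - c) v) x := by
    intro a c b hac hcb' v x
    rw [hE]
    apply ciSup_le
    intro l
    have hba : b - a = (c - a) + (b - c) := by ring
    rw [hba, hsg l (c - a) (b - c) (by linarith) (by linarith) v]
    calc S l (c - a) (S l (b - c) v) x
        ≤ E (c - a) (S l (b - c) v) x := by
          rw [hE]; exact le_ciSup (hbdd _ _ _) l
      _ ≤ E (c - a) (E (b - c) v) x := by
          apply hmono (c - a) (by linarith)
          intro y
          rw [hE]; exact le_ciSup (hbdd _ _ _) l
  have hins : ∀ (π : Finset ℝ) (s : ℝ), (∃ a ∈ π, a ≤ s) → (∃ b ∈ π, s ≤ b) →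
      ∀ (u : M → ℝ) (x : M), Epart E π u x ≤ Epart E (insert s π) u x := by
    intro π s hlo hhi u x
    by_cases hsmem : s ∈ π
    · rw [Finset.insert_eq_self.mpr hsmem]
    · unfold Epart
      rw [sort_insert_orderedInsert π s hsmem]
      apply applyPart_le_orderedInsert hmono hK _ (Finset.pairwise_sort _ _) s
      · intro h; exact hsmem ((Finset.mem_sort _).mp h)
      · obtain ⟨a, ha, h⟩ := hlo; exact ⟨a, (Finset.mem_sort _).mpr ha, h⟩
      · obtain ⟨b, hb, h⟩ := hhi; exact ⟨b, (Finset.mem_sort _).mpr hb, h⟩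
  have href : ∀ (t : ℝ) (π π' : Finset ℝ), π ∈ PartsOf t → π' ∈ PartsOf t → π ⊆ π' →
      ∀ u x, Epart E π u x ≤ Epart E π' u x := by
    intro t π π' hπ hπ' hsub u x
    have key : ∀ Δ : Finset ℝ, (∀ a ∈ Δ, 0 ≤ a ∧ a ≤ t) →
        ∀ x, Epart E π u x ≤ Epart E (π ∪ Δ) u x := by
      intro Δ
      induction Δ using Finset.induction_on with
      | empty => intro _ x; rw [Finset.union_empty]
      | @insert a Δ' hnot ih =>
        intro hΔ x
        have h1 := ih (fun b hb => hΔ b (Finset.mem_insert_of_mem hb)) x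
        have h2 : π ∪ insert a Δ' = insert a (π ∪ Δ') := by
          ext y
          simp only [Finset.mem_insert, Finset.mem_union]
          tauto
        rw [h2]
        refine h1.trans (hins (π ∪ Δ') a ?_ ?_ u x)
        · exact ⟨0, Finset.mem_union_left _ hπ.1, (hΔ a (Finset.mem_insert_self _ _)).1⟩
        · exact ⟨t, Finset.mem_union_left _ hπ.2.1, (hΔ a (Finset.mem_insert_self _ _)).2⟩
    have hun : π ∪ π' = π' := Finset.union_eq_right.mpr hsub
    calc Epart E π u x ≤ Epart E (π ∪ π') u x := key π' (fun a ha => hπ'.2.2 a ha) x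
      _ = Epart E π' u x := by rw [hun]
  intro s t hs ht u x
  have hPmem : ∀ r : ℝ, 0 ≤ r → ({0, r} : Finset ℝ) ∈ PartsOf r := by
    intro r hr
    refine ⟨by simp, by simp, ?_⟩
    intro y hy
    rcases Finset.mem_insert.mp hy with h | h
    · subst h; exact ⟨le_refl 0, hr⟩
    · rw [Finset.mem_singleton] at h; subst h; exact ⟨hr, le_refl _⟩
  haveI : Nonempty ↥(PartsOf (s + t)) := ⟨⟨_, hPmem (s + t) (by linarith)⟩⟩
  haveI : Nonempty ↥(PartsOf s) := ⟨⟨_, hPmem s hs⟩⟩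
  haveI : Nonempty ↥(PartsOf t) := ⟨⟨_, hPmem t ht⟩⟩
  have hdec : ∀ π : Finset ℝ, π ∈ PartsOf (s + t) → s ∈ π →
      ∃ σ τ : Finset ℝ, σ ∈ PartsOf s ∧ τ ∈ PartsOf t ∧
        ∀ v : M → ℝ, Epart E π v = Epart E σ (Epart E τ v) := by
    intro π hπ hsπ
    set σ := π.filter (· ≤ s) with hσdef
    set B := π.filter (s ≤ ·) with hBdef
    set τ := B.image (· + (-s)) with hτdef
    have hsσ : s ∈ σ := Finset.mem_filter.mpr ⟨hsπ, le_refl s⟩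
    have hsB : s ∈ B := Finset.mem_filter.mpr ⟨hsπ, le_refl s⟩
    have hσmem : σ ∈ PartsOf s := by
      refine ⟨Finset.mem_filter.mpr ⟨hπ.1, hs⟩, hsσ, ?_⟩
      intro y hy
      obtain ⟨hyπ, hys⟩ := Finset.mem_filter.mp hy
      exact ⟨(hπ.2.2 y hyπ).1, hys⟩
    have hτmem : τ ∈ PartsOf t := by
      refine ⟨Finset.mem_image.mpr ⟨s, hsB, by ring⟩,
        Finset.mem_image.mpr ⟨s + t, Finset.mem_filter.mpr ⟨hπ.2.1, by linarith⟩, by ring⟩, ?_⟩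
      intro y hy
      obtain ⟨z, hz, rfl⟩ := Finset.mem_image.mp hy
      obtain ⟨hzπ, hsz⟩ := Finset.mem_filter.mp hz
      exact ⟨by linarith, by linarith [(hπ.2.2 z hzπ).2]⟩
    have hτB : τ.image (· + s) = B := by
      ext y
      simp only [hτdef, Finset.mem_image]
      constructor
      · rintro ⟨z, ⟨w, hw, rfl⟩, rfl⟩
        have : w + -s + s = w := by ring
        rwa [this]
      · intro hy
        exact ⟨y + (-s), ⟨y, hy, rfl⟩, by ring⟩
    have hunion : σ ∪ B = π := by
      ext y
      simp only [Finset.mem_union, hσdef, hBdef, Finset.mem_filter]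
      constructor
      · rintro (h | h) <;> exact h.1
      · intro hy
        rcases le_total y s with h | h
        · exact Or.inl ⟨hy, h⟩
        · exact Or.inr ⟨hy, h⟩
    refine ⟨σ, τ, hσmem, hτmem, fun v => ?_⟩
    have hEu := Epart_union (E := E) σ B s hsσ hsB
      (fun y hy => (Finset.mem_filter.mp hy).2)
      (fun y hy => (Finset.mem_filter.mp hy).2) v
    rw [hunion] at hEu
    rw [hEu]
    congr 1
    rw [← hτB, Epart_image_add]
  have hsplit : ∀ σ τ : Finset ℝ, σ ∈ PartsOf s → τ ∈ PartsOf t →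
      (σ ∪ τ.image (· + s)) ∈ PartsOf (s + t) ∧
      ∀ v : M → ℝ, Epart E (σ ∪ τ.image (· + s)) v = Epart E σ (Epart E τ v) := by
    intro σ τ hσ hτ
    have hcB : s ∈ τ.image (· + s) := Finset.mem_image.mpr ⟨0, hτ.1, by ring⟩
    constructor
    · refine ⟨Finset.mem_union_left _ hσ.1,
        Finset.mem_union_right _ (Finset.mem_image.mpr ⟨t, hτ.2.1, by ring⟩), ?_⟩
      intro y hy
      rcases Finset.mem_union.mp hy with h | h
      · have h' := hσ.2.2 y h
        exact ⟨h'.1, by linarith [h'.2]⟩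
      · obtain ⟨z, hz, rfl⟩ := Finset.mem_image.mp h
        have h' := hτ.2.2 z hz
        exact ⟨by linarith [h'.1], by linarith [h'.2]⟩
    · intro v
      rw [Epart_union σ (τ.image (· + s)) s hσ.2.1 hcB
        (fun y hy => (hσ.2.2 y hy).2)
        (fun y hy => by
          obtain ⟨z, hz, rfl⟩ := Finset.mem_image.mp hy
          linarith [(hτ.2.2 z hz).1]),
        Epart_image_add]
  apply le_antisymm
  · rw [Nisio]
    apply ciSup_le
    rintro ⟨π, hπ⟩
    have hπ' : insert s π ∈ PartsOf (s + t) := by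
      refine ⟨Finset.mem_insert_of_mem hπ.1, Finset.mem_insert_of_mem hπ.2.1, ?_⟩
      intro y hy
      rcases Finset.mem_insert.mp hy with h | h
      · subst h; exact ⟨hs, by linarith⟩
      · exact hπ.2.2 y h
    have h1 : Epart E π u x ≤ Epart E (insert s π) u x :=
      hins π s ⟨0, hπ.1, hs⟩ ⟨s + t, hπ.2.1, by linarith⟩ u x
    obtain ⟨σ, τ, hσ, hτ, hEq⟩ := hdec (insert s π) hπ' (Finset.mem_insert_self s π)
    have h2 : Epart E (insert s π) u x = Epart E σ (Epart E τ u) x := by rw [hEq u]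
    have h3 : ∀ y, Epart E τ u y ≤ Nisio E t u y := by
      intro y
      exact le_ciSup (hbddN t u y) (⟨τ, hτ⟩ : ↥(PartsOf t))
    have h4 : Epart E σ (Epart E τ u) x ≤ Epart E σ (Nisio E t u) x :=
      applyPart_mono hmono _ (Finset.pairwise_sort _ _) _ _ h3 x
    have h5 : Epart E σ (Nisio E t u) x ≤ Nisio E s (Nisio E t u) x :=
      le_ciSup (hbddN s _ x) (⟨σ, hσ⟩ : ↥(PartsOf s))
    linarith
  · rw [Nisio]
    apply ciSup_le
    rintro ⟨σ, hσ⟩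
    obtain ⟨π, hπmem, hπsub, hπtend⟩ := happrox t ht u
    have hincr : ∀ n y, Epart E (π n) u y ≤ Epart E (π (n + 1)) u y :=
      fun n y => href t (π n) (π (n + 1)) (hπmem n) (hπmem (n + 1)) (hπsub n) u y
    have hlim : Filter.Tendsto (fun n => Epart E σ (Epart E (π n) u) x) Filter.atTop
        (nhds (Epart E σ (Nisio E t u) x)) :=
      applyPart_tendsto hmono hcb _ (Finset.pairwise_sort _ _)
        (fun n => Epart E (π n) u) (Nisio E t u) hincr hπtend x
    apply le_of_tendsto hlim
    apply Filter.Eventually.of_forall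
    intro n
    have h := hsplit σ (π n) hσ (hπmem n)
    have h2 : Epart E σ (Epart E (π n) u) x = Epart E (σ ∪ (π n).image (· + s)) u x := by
      rw [h.2 u]
    rw [h2]
    exact le_ciSup (hbddN (s + t) u x) (⟨_, h.1⟩ : ↥(PartsOf (s + t)))
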